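/- Let H₀ be the set of real 4×4 matrices N(v,a) := [[v,0,0,0],[0,v,a,a²/(2v)],[0,0,1,a/v],[0,0,0,1/v]] with v > 0 and a ∈ ℝ, and let G₂ be the set of real 3×3 matrices g(u,x) := [[u,0,0],[x,√u,0],[x,0,√u]] with u > 0 and x ∈ ℝ. Then H₀ is a subgroup of GL(4,ℝ), G₂ is a subgroup of GL(3,ℝ), and the map N(v,a) ↦ g(v^{−2}, a·v^{−2}) is a group isomorphism from H₀ onto G₂. In particular, H₀ and G₂ are isomorphic two-dimensional Lie groups (each isomorphic to the affine group of the real line). -/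

import Mathlib

open Matrix

/-- The matrix `N(v,a) = [[v,0,0,0],[0,v,a,a²/(2v)],[0,0,1,a/v],[0,0,0,1/v]]`. -/
noncomputable def Nmat (v a : ℝ) : Matrix (Fin 4) (Fin 4) ℝ :=
  !![v, 0, 0, 0;
     0, v, a, a ^ 2 / (2 * v);
     0, 0, 1, a / v;
     0, 0, 0, 1 / v]

/-- The matrix `g(u,x) = [[u,0,0],[x,√u,0],[x,0,√u]]`. -/
noncomputable def gmat (u x : ℝ) : Matrix (Fin 3) (Fin 3) ℝ :=
  !![u, 0, 0;
     x, Real.sqrt u, 0;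
     x, 0, Real.sqrt u]

/-- The isotropy group `H₀ = {N(v,a) : v > 0, a ∈ ℝ}`. -/
noncomputable def H₀ : Set (Matrix (Fin 4) (Fin 4) ℝ) :=
  {M | ∃ v a : ℝ, 0 < v ∧ M = Nmat v a}

/-- The structure group `G₂ = {g(u,x) : u > 0, x ∈ ℝ}`. -/
noncomputable def G₂ : Set (Matrix (Fin 3) (Fin 3) ℝ) :=
  {M | ∃ u x : ℝ, 0 < u ∧ M = gmat u x}

lemma Nmat_mul (v a w b : ℝ) (hv : v ≠ 0) (hw : w ≠ 0) :
    Nmat v a * Nmat w b = Nmat (v * w) (a + v * b) := by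
  ext i j
  fin_cases i <;> fin_cases j <;>
    simp [Nmat, Matrix.mul_apply, Fin.sum_univ_four, Matrix.vecHead, Matrix.vecTail] <;>
    (try field_simp) <;> (try ring)

lemma Nmat_one : Nmat 1 0 = 1 := by
  ext i j
  fin_cases i <;> fin_cases j <;>
    simp [Nmat, Matrix.one_apply, Matrix.vecHead, Matrix.vecTail]

lemma gmat_mul (u x w y : ℝ) (hu : 0 ≤ u) :
    gmat u x * gmat w y = gmat (u * w) (x * w + Real.sqrt u * y) := by
  ext i j
  fin_cases i <;> fin_cases j <;>
    simp [gmat, Matrix.mul_apply, Fin.sum_univ_three, Matrix.vecHead, Matrix.vecTail,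
      Real.sqrt_mul hu]

lemma gmat_one : gmat 1 0 = 1 := by
  ext i j
  fin_cases i <;> fin_cases j <;>
    simp [gmat, Matrix.one_apply, Matrix.vecHead, Matrix.vecTail]

noncomputable def NtoG (M : Matrix (Fin 4) (Fin 4) ℝ) : Matrix (Fin 3) (Fin 3) ℝ :=
  gmat ((M 0 0) ^ 2)⁻¹ (M 1 2 * ((M 0 0) ^ 2)⁻¹)

lemma NtoG_Nmat (v a : ℝ) : NtoG (Nmat v a) = gmat (v ^ 2)⁻¹ (a * (v ^ 2)⁻¹) := by
  have h0 : Nmat v a 0 0 = v := by simp [Nmat]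
  have h1 : Nmat v a 1 2 = a := by simp [Nmat, Matrix.vecHead, Matrix.vecTail]
  simp [NtoG, h0, h1]

lemma gmat_inj {u x u' x' : ℝ} (h : gmat u x = gmat u' x') : u = u' ∧ x = x' := by
  constructor
  · have := congrFun (congrFun h 0) 0
    simpa [gmat] using this
  · have := congrFun (congrFun h 1) 0
    simpa [gmat, Matrix.vecHead, Matrix.vecTail] using this

/-- `H₀` and `G₂` are subgroups of `GL(4,ℝ)` and `GL(3,ℝ)` respectively, and
`N(v,a) ↦ g(v⁻², a·v⁻²)` is a group isomorphism from `H₀` onto `G₂`. -/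
theorem H₀_isomorphic_to_G₂ :
    ((1 : Matrix (Fin 4) (Fin 4) ℝ) ∈ H₀ ∧
      (∀ A ∈ H₀, ∀ B ∈ H₀, A * B ∈ H₀) ∧
      (∀ A ∈ H₀, IsUnit A ∧ A⁻¹ ∈ H₀)) ∧
    ((1 : Matrix (Fin 3) (Fin 3) ℝ) ∈ G₂ ∧
      (∀ A ∈ G₂, ∀ B ∈ G₂, A * B ∈ G₂) ∧
      (∀ A ∈ G₂, IsUnit A ∧ A⁻¹ ∈ G₂)) ∧
    (∃ φ : Matrix (Fin 4) (Fin 4) ℝ → Matrix (Fin 3) (Fin 3) ℝ,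
      (∀ v a : ℝ, 0 < v → φ (Nmat v a) = gmat (v ^ 2)⁻¹ (a * (v ^ 2)⁻¹)) ∧
      Set.BijOn φ H₀ G₂ ∧
      (∀ A ∈ H₀, ∀ B ∈ H₀, φ (A * B) = φ A * φ B)) := by
  refine ⟨⟨⟨1, 0, one_pos, Nmat_one.symm⟩, ?_, ?_⟩,
    ⟨⟨1, 0, one_pos, gmat_one.symm⟩, ?_, ?_⟩, NtoG, fun v a _ => NtoG_Nmat v a, ⟨?_, ?_, ?_⟩, ?_⟩
  · rintro A ⟨v, a, hv, rfl⟩ B ⟨w, b, hw, rfl⟩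
    exact ⟨v * w, a + v * b, mul_pos hv hw, Nmat_mul v a w b hv.ne' hw.ne'⟩
  · rintro A ⟨v, a, hv, rfl⟩
    have hinv : (0:ℝ) < v⁻¹ := inv_pos.2 hv
    have hAB : Nmat v a * Nmat v⁻¹ (-(a / v)) = 1 := by
      rw [Nmat_mul v a v⁻¹ _ hv.ne' hinv.ne', mul_inv_cancel₀ hv.ne']
      have : a + v * -(a / v) = 0 := by field_simp; ring
      rw [this, Nmat_one]
    have hBA : Nmat v⁻¹ (-(a / v)) * Nmat v a = 1 := by
      rw [Nmat_mul v⁻¹ _ v a hinv.ne' hv.ne', inv_mul_cancel₀ hv.ne']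
      have : -(a / v) + v⁻¹ * a = 0 := by field_simp; ring
      rw [this, Nmat_one]
    refine ⟨isUnit_iff_exists.2 ⟨_, hAB, hBA⟩, ?_⟩
    rw [Matrix.inv_eq_right_inv hAB]
    exact ⟨v⁻¹, -(a / v), hinv, rfl⟩
  · rintro A ⟨u, x, hu, rfl⟩ B ⟨w, y, hw, rfl⟩
    exact ⟨u * w, x * w + Real.sqrt u * y, mul_pos hu hw, gmat_mul u x w y hu.le⟩
  · rintro A ⟨u, x, hu, rfl⟩
    have hs : Real.sqrt u ≠ 0 := (Real.sqrt_pos.2 hu).ne'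
    have hinv : (0:ℝ) < u⁻¹ := inv_pos.2 hu
    have hAB : gmat u x * gmat u⁻¹ (-(x / (u * Real.sqrt u))) = 1 := by
      rw [gmat_mul u x u⁻¹ _ hu.le, mul_inv_cancel₀ hu.ne']
      have : x * u⁻¹ + Real.sqrt u * -(x / (u * Real.sqrt u)) = 0 := by
        field_simp
        ring
      rw [this, gmat_one]
    have hBA : gmat u⁻¹ (-(x / (u * Real.sqrt u))) * gmat u x = 1 := by
      rw [gmat_mul u⁻¹ _ u x hinv.le, inv_mul_cancel₀ hu.ne']
      have : -(x / (u * Real.sqrt u)) * u + Real.sqrt u⁻¹ * x = 0 := by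
        rw [Real.sqrt_inv]
        field_simp
        ring
      rw [this, gmat_one]
    refine ⟨isUnit_iff_exists.2 ⟨_, hAB, hBA⟩, ?_⟩
    rw [Matrix.inv_eq_right_inv hAB]
    exact ⟨u⁻¹, -(x / (u * Real.sqrt u)), hinv, rfl⟩
  · -- MapsTo
    rintro A ⟨v, a, hv, rfl⟩
    exact ⟨(v ^ 2)⁻¹, a * (v ^ 2)⁻¹, inv_pos.2 (pow_pos hv 2), NtoG_Nmat v a⟩
  · -- InjOn
    rintro A ⟨v, a, hv, rfl⟩ B ⟨w, b, hw, rfl⟩ h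
    rw [NtoG_Nmat, NtoG_Nmat] at h
    obtain ⟨h1, h2⟩ := gmat_inj h
    have hv2 : v ^ 2 = w ^ 2 := by
      have := inv_injective h1; exact this
    have hvw : v = w := by nlinarith
    subst hvw
    have hne : ((v ^ 2)⁻¹ : ℝ) ≠ 0 := inv_ne_zero (pow_ne_zero 2 hv.ne')
    have : a = b := mul_right_cancel₀ hne h2
    rw [this]
  · -- SurjOn
    rintro M ⟨u, x, hu, rfl⟩
    have hs : (0:ℝ) < Real.sqrt u := Real.sqrt_pos.2 hu
    refine ⟨Nmat (Real.sqrt u)⁻¹ (x / u), ⟨(Real.sqrt u)⁻¹, x / u, inv_pos.2 hs, rfl⟩, ?_⟩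
    rw [NtoG_Nmat]
    have h2 : (((Real.sqrt u)⁻¹) ^ 2)⁻¹ = u := by
      rw [inv_pow, Real.sq_sqrt hu.le, inv_inv]
    rw [h2]
    have : x / u * u = x := div_mul_cancel₀ x hu.ne'
    rw [this]
  · -- homomorphism
    rintro A ⟨v, a, hv, rfl⟩ B ⟨w, b, hw, rfl⟩
    rw [Nmat_mul v a w b hv.ne' hw.ne', NtoG_Nmat, NtoG_Nmat, NtoG_Nmat,
      gmat_mul _ _ _ _ (inv_pos.2 (pow_pos hv 2)).le]
    have hsq : Real.sqrt ((v ^ 2)⁻¹) = v⁻¹ := by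
      rw [Real.sqrt_inv, Real.sqrt_sq hv.le]
    rw [hsq]
    have hu : ((v * w) ^ 2)⁻¹ = (v ^ 2)⁻¹ * (w ^ 2)⁻¹ := by
      rw [mul_pow, mul_inv]
    have hx : (a + v * b) * ((v * w) ^ 2)⁻¹ =
        a * (v ^ 2)⁻¹ * (w ^ 2)⁻¹ + v⁻¹ * (b * (w ^ 2)⁻¹) := by
      field_simp
    rw [hu] at hx ⊢
    rw [hx]
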